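/- Let m ≥ 1, let O ⊆ ℝ^m be a nonempty open convex set, let f, g : O → ℝ be convex, and let X ⊆ O be a nonempty compact convex set. Suppose (f_t)_{t∈T_f} and (g_t)_{t∈T_g} are lower-C² representations of f and g on an open set O' with X ⊆ O' ⊆ O, and let K_f ≥ 0 and K_g ≥ 0 be such that every ∇f_t (t ∈ T_f) and every ∇g_t (t ∈ T_g) is, respectively, K_f- and K_g-Lipschitz on X. Let L_f ≥ 0 and L_g ≥ 0 be such that ‖v‖ ≤ L_f for all v ∈ ∂f(x), x ∈ X, and ‖v‖ ≤ L_g for all v ∈ ∂g(x), x ∈ X. Let Y = (y₀, y₁, ..., y_m) be a poised tuple with y₀ ∈ X, set Δ = max_{1≤i≤m} ‖y_i − y₀‖, and suppose B(y₀; Δ) ⊆ X. Fix ε > 0 and let x ∈ B(y₀; Δ). Choose t₁,...,t_r in the active set A_f(x) of the representation of f with convex weights λ ∈ ℝ^r, and t̄₁,...,t̄_{r̄} in the active set A_g(x) of the representation of g with convex weights λ̄ ∈ ℝ^{r̄}; set v_f(x) = Σ λ_i ∇f_{t_i}(x), V_f(x) = Σ λ_i ∇F_{t_i}(x), v_g(x)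 = Σ λ̄_i ∇g_{t̄_i}(x), V_g(x) = Σ λ̄_i ∇G_{t̄_i}(x), where F_{t_i} and G_{t̄_i} are the linear interpolation models of f_{t_i} and g_{t̄_i} over Y. Define e(x) = v_f(x) if g(x) ≤ ε and e(x) = v_g(x) otherwise, and E(x) = V_f(x) if g(x) ≤ ε and E(x) = V_g(x) otherwise. Then, with κ = max{K_f, K_g}·(1 + √m·‖L̂⁻¹‖/2): (i) ‖e(x) − E(x)‖ ≤ κ·Δ, and (ii) ‖E(x)‖ ≤ max{L_f, L_g} + κ·Δ. -/

import Mathlib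

open scoped RealInnerProductSpace

/-- The subdifferential of `f : O → ℝ` at `x`:
`∂f(x) = {v : f(y) ≥ f(x) + ⟪v, y - x⟫ for all y ∈ O}`. -/
def subdiff {m : ℕ} (O : Set (EuclideanSpace ℝ (Fin m)))
    (f : EuclideanSpace ℝ (Fin m) → ℝ) (x : EuclideanSpace ℝ (Fin m)) :
    Set (EuclideanSpace ℝ (Fin m)) :=
  {v | ∀ y ∈ O, f x + ⟪v, y - x⟫ ≤ f y}

/-- `(ft t)_{t ∈ T}` is a lower-C² representation of `f` on the set `V`: each `ft t`
is C² on `V`, the values, gradients and Hessians depend continuously on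
`(t, x) ∈ T × V`, and `f = max_{t ∈ T} ft t` on `V` (the maximum being attained). -/
def IsLowerC2Rep {m : ℕ} (T : Type) [TopologicalSpace T]
    (f : EuclideanSpace ℝ (Fin m) → ℝ)
    (ft : T → EuclideanSpace ℝ (Fin m) → ℝ)
    (V : Set (EuclideanSpace ℝ (Fin m))) : Prop :=
  (∀ t : T, ContDiffOn ℝ 2 (ft t) V) ∧
  ContinuousOn (fun p : T × EuclideanSpace ℝ (Fin m) => ft p.1 p.2)
    (Set.univ ×ˢ V) ∧
  ContinuousOn (fun p : T × EuclideanSpace ℝ (Fin m) => gradient (ft p.1) p.2)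
    (Set.univ ×ˢ V) ∧
  ContinuousOn
    (fun p : T × EuclideanSpace ℝ (Fin m) => fderiv ℝ (gradient (ft p.1)) p.2)
    (Set.univ ×ˢ V) ∧
  (∀ x ∈ V, (∀ t : T, ft t x ≤ f x) ∧ (∃ t : T, ft t x = f x))

/-- A tuple `Y = (y₀, …, y_m)` of points of `ℝ^m` is poised if the `(m+1)×(m+1)` matrix
whose `i`-th row is `(1, yᵢ)` is invertible. -/
def Poised {m : ℕ} (Y : Fin (m + 1) → EuclideanSpace ℝ (Fin m)) : Prop :=
  (Matrix.of fun i : Fin (m + 1) => Fin.cons (1 : ℝ) (fun j : Fin m => Y i j)).det ≠ 0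

/-- The spectral norm of a square real matrix, i.e. the operator norm of the induced
map on Euclidean space. -/
noncomputable def specNorm {n : ℕ} (M : Matrix (Fin n) (Fin n) ℝ) : ℝ :=
  ‖(Matrix.toEuclideanCLM (𝕜 := ℝ) M :
      EuclideanSpace ℝ (Fin n) →L[ℝ] EuclideanSpace ℝ (Fin n))‖

/-- The matrix `L(Y)` whose `i`-th row is `yᵢ - y₀`, for `i = 1, …, m`. -/
noncomputable def Lmat {m : ℕ} (Y : Fin (m + 1) → EuclideanSpace ℝ (Fin m)) :
    Matrix (Fin m) (Fin m) ℝ :=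
  Matrix.of fun i j : Fin m => (Y i.succ - Y 0) j

variable {m : ℕ}

lemma grad_affine (a₀ : ℝ) (a x : EuclideanSpace ℝ (Fin m)) :
    gradient (fun z => a₀ + ⟪a, z⟫) x = a := by
  have heq : ((InnerProductSpace.toDual ℝ (EuclideanSpace ℝ (Fin m))) a :
      EuclideanSpace ℝ (Fin m) →L[ℝ] ℝ) = innerSL ℝ a := by
    ext y; simp [InnerProductSpace.toDual_apply_apply]
  have h1 : HasFDerivAt (fun z : EuclideanSpace ℝ (Fin m) => a₀ + ⟪a, z⟫)
      ((InnerProductSpace.toDual ℝ (EuclideanSpace ℝ (Fin m))) a) x := by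
    rw [heq]
    exact ((innerSL ℝ a).hasFDerivAt (x := x)).const_add a₀
  rw [h1.hasGradientAt.gradient, LinearIsometryEquiv.symm_apply_apply]

lemma inner_gradient_eq' (h : EuclideanSpace ℝ (Fin m) → ℝ) (p d : EuclideanSpace ℝ (Fin m)) :
    ⟪gradient h p, d⟫ = fderiv ℝ h p d := by
  rw [gradient, InnerProductSpace.toDual_symm_apply]

lemma taylor_bound {V X : Set (EuclideanSpace ℝ (Fin m))} (hV : IsOpen V)
    {h : EuclideanSpace ℝ (Fin m) → ℝ} (hC : ContDiffOn ℝ 2 h V) (hXV : X ⊆ V)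
    (hXc : Convex ℝ X) {K : ℝ} (hK : 0 ≤ K)
    (hlip : ∀ p ∈ X, ∀ q ∈ X, ‖gradient h p - gradient h q‖ ≤ K * ‖p - q‖)
    {u w : EuclideanSpace ℝ (Fin m)} (hu : u ∈ X) (hw : w ∈ X) :
    |h w - h u - ⟪gradient h u, w - u⟫| ≤ K / 2 * ‖w - u‖ ^ 2 := by
  set γ : ℝ → EuclideanSpace ℝ (Fin m) := fun t => u + t • (w - u) with hγdef
  have hγX : ∀ t ∈ Set.Icc (0:ℝ) 1, γ t ∈ X := by
    intro t ht
    simpa using hXc.add_smul_sub_mem hu hw ht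
  have hdiff : ∀ p ∈ X, DifferentiableAt ℝ h p := fun p hp =>
    ((hC.differentiableOn (by norm_num)).differentiableAt (hV.mem_nhds (hXV hp)))
  have hγd : ∀ t : ℝ, HasDerivAt γ (w - u) t := by
    intro t
    have := ((hasDerivAt_id t).smul_const (w - u)).const_add u
    rwa [one_smul] at this
  set f : ℝ → ℝ := fun t => h (γ t) - h u - t * ⟪gradient h u, w - u⟫ with hfdef
  set f' : ℝ → ℝ := fun t => ⟪gradient h (γ t) - gradient h u, w - u⟫ with hf'def
  have hder : ∀ t ∈ Set.Icc (0:ℝ) 1, HasDerivAt f (f' t) t := by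
    intro t ht
    have h1 : HasDerivAt (fun s => h (γ s)) (fderiv ℝ h (γ t) (w - u)) t :=
      (hdiff (γ t) (hγX t ht)).hasFDerivAt.comp_hasDerivAt t (hγd t)
    have h2 : HasDerivAt f (fderiv ℝ h (γ t) (w - u) - ⟪gradient h u, w - u⟫) t := by
      have h2' := (h1.sub_const (h u)).sub
        ((hasDerivAt_id t).mul_const ⟪gradient h u, w - u⟫)
      rw [one_mul] at h2'
      exact h2'
    have h3 : f' t = fderiv ℝ h (γ t) (w - u) - ⟪gradient h u, w - u⟫ := by
      simp only [hf'def, inner_sub_left, inner_gradient_eq']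
    rw [h3]; exact h2
  set B : ℝ → ℝ := fun t => K * ‖w - u‖ ^ 2 / 2 * t ^ 2 with hBdef
  set B' : ℝ → ℝ := fun t => K * ‖w - u‖ ^ 2 / 2 * (2 * t) with hB'def
  have hB : ∀ t : ℝ, HasDerivAt B (B' t) t := by
    intro t
    simpa [hBdef, hB'def] using (hasDerivAt_pow 2 t).const_mul (K * ‖w - u‖ ^ 2 / 2)
  have hbound : ∀ t ∈ Set.Ico (0:ℝ) 1, ‖f' t‖ ≤ B' t := by
    intro t ht
    have h1 : ‖f' t‖ ≤ ‖gradient h (γ t) - gradient h u‖ * ‖w - u‖ := by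
      simpa [hf'def] using abs_real_inner_le_norm (gradient h (γ t) - gradient h u) (w - u)
    have h2 : ‖gradient h (γ t) - gradient h u‖ ≤ K * (t * ‖w - u‖) := by
      have := hlip (γ t) (hγX t (Set.Ico_subset_Icc_self ht)) u hu
      have hn : ‖γ t - u‖ = t * ‖w - u‖ := by
        simp [hγdef, norm_smul, abs_of_nonneg ht.1]
      rw [hn] at this; exact this
    have h3 : ‖f' t‖ ≤ K * (t * ‖w - u‖) * ‖w - u‖ :=
      h1.trans (by
        apply mul_le_mul_of_nonneg_right h2 (norm_nonneg _))
    calc ‖f' t‖ ≤ K * (t * ‖w - u‖) * ‖w - u‖ := h3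
      _ = B' t := by simp only [hB'def]; ring
  have hcont : ContinuousOn f (Set.Icc 0 1) := fun t ht =>
    (hder t ht).continuousAt.continuousWithinAt
  have ha : ‖f 0‖ ≤ B 0 := by simp [hfdef, hBdef, hγdef]
  have key := image_norm_le_of_norm_deriv_right_le_deriv_boundary hcont
    (fun t ht => (hder t (Set.Ico_subset_Icc_self ht)).hasDerivWithinAt) ha hB hbound
    (Set.right_mem_Icc.2 zero_le_one)
  have hγ1 : γ 1 = w := by simp [hγdef]
  have : ‖f 1‖ = |h w - h u - ⟪gradient h u, w - u⟫| := by
    simp [hfdef, hγ1]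
  rw [this] at key
  calc |h w - h u - ⟪gradient h u, w - u⟫| ≤ B 1 := key
    _ = K / 2 * ‖w - u‖ ^ 2 := by simp only [hBdef]; ring

lemma poised_det (Y : Fin (m + 1) → EuclideanSpace ℝ (Fin m)) (hp : Poised Y) :
    (Lmat Y).det ≠ 0 := by
  set M : Matrix (Fin (m + 1)) (Fin (m + 1)) ℝ :=
    Matrix.of fun i : Fin (m + 1) => Fin.cons (1 : ℝ) (fun j : Fin m => Y i j) with hM
  set c : Fin (m + 1) → ℝ := fun i => if i = 0 then 0 else 1 with hc
  set N : Matrix (Fin (m + 1)) (Fin (m + 1)) ℝ :=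
    Matrix.of fun i j => M i j - c i * M 0 j with hN
  have hdet : M.det = N.det := by
    apply Matrix.det_eq_of_forall_row_eq_smul_add_const c 0 (by simp [hc])
    intro i j
    have hN0 : N 0 j = M 0 j := by simp [hN, hc]
    rw [hN0]
    show M i j = (M i j - c i * M 0 j) + c i * M 0 j
    ring
  have hN0col : ∀ i, N i 0 = if i = 0 then 1 else 0 := by
    intro i
    have hM0 : ∀ k, M k 0 = 1 := by intro k; simp [hM]
    by_cases hi : i = 0 <;> simp [hN, hc, hi, hM0]
  have hsub : N.submatrix Fin.succ Fin.succ = Lmat Y := by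
    ext i j
    simp [Matrix.submatrix_apply, hN, hM, hc, Lmat, Fin.succ_ne_zero, PiLp.sub_apply]
  have hdet2 : N.det = (Lmat Y).det := by
    rw [Matrix.det_succ_column_zero]
    rw [Finset.sum_eq_single (0 : Fin (m + 1))]
    · simp [hN0col, hsub]
    · intro i _ hi
      simp [hN0col, hi]
    · simp
  intro h
  exact hp (by rw [show (Matrix.of fun i : Fin (m + 1) => Fin.cons (1 : ℝ) (fun j : Fin m => Y i j)).det = M.det from rfl, hdet, hdet2, h])

lemma norm_le_of_rows (Y : Fin (m + 1) → EuclideanSpace ℝ (Fin m))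
    (hdet : (Lmat Y).det ≠ 0) {Δ : ℝ} (hΔ : 0 < Δ)
    (w : EuclideanSpace ℝ (Fin m)) {c : ℝ} (hc : 0 ≤ c)
    (hrow : ∀ i : Fin m, |⟪Y i.succ - Y 0, w⟫| ≤ c) :
    ‖w‖ ≤ Real.sqrt m * specNorm (Δ⁻¹ • Lmat Y)⁻¹ * c / Δ := by
  set Lh : Matrix (Fin m) (Fin m) ℝ := Δ⁻¹ • Lmat Y with hLh
  have hdeth : Lh.det ≠ 0 := by
    rw [hLh, Matrix.det_smul]
    exact mul_ne_zero (pow_ne_zero _ (inv_ne_zero hΔ.ne')) hdet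
  have hinv : Lh⁻¹ * Lh = 1 := Matrix.nonsing_inv_mul Lh (isUnit_iff_ne_zero.2 hdeth)
  set T := Matrix.toEuclideanCLM (n := Fin m) (𝕜 := ℝ)
  have hw : T Lh⁻¹ (T Lh w) = w := by
    have : T Lh⁻¹ (T Lh w) = T (Lh⁻¹ * Lh) w := by
      rw [map_mul]; rfl
    rw [this, hinv, map_one]; rfl
  -- bound on ‖T Lh w‖
  have hcoord : ∀ i : Fin m, |(T Lh w) i| ≤ Δ⁻¹ * c := by
    intro i
    have happ : (T Lh w) i = Lh.mulVec (WithLp.equiv 2 _ w) i := by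
      have := Matrix.ofLp_toEuclideanCLM (𝕜 := ℝ) Lh w
      calc (T Lh w) i = (WithLp.equiv 2 _ (T Lh w)) i := rfl
        _ = Lh.mulVec (WithLp.equiv 2 _ w) i := congrFun this i
    have hmv : Lh.mulVec (WithLp.equiv 2 _ w) i = Δ⁻¹ * ⟪Y i.succ - Y 0, w⟫ := by
      rw [hLh]
      simp only [Matrix.smul_mulVec, Pi.smul_apply, smul_eq_mul]
      congr 1
      simp [Matrix.mulVec, dotProduct, Lmat, PiLp.inner_apply, mul_comm]
    rw [happ, hmv, abs_mul, abs_of_nonneg (inv_nonneg.2 hΔ.le)]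
    exact mul_le_mul_of_nonneg_left (hrow i) (inv_nonneg.2 hΔ.le)
  have hTLw : ‖T Lh w‖ ≤ Real.sqrt m * (Δ⁻¹ * c) := by
    rw [EuclideanSpace.norm_eq]
    have h1 : ∑ i : Fin m, ‖(T Lh w) i‖ ^ 2 ≤ (m : ℝ) * (Δ⁻¹ * c) ^ 2 := by
      calc ∑ i : Fin m, ‖(T Lh w) i‖ ^ 2 ≤ ∑ _i : Fin m, (Δ⁻¹ * c) ^ 2 := by
            apply Finset.sum_le_sum
            intro i _
            have := hcoord i
            rw [Real.norm_eq_abs]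
            exact pow_le_pow_left₀ (abs_nonneg _) this 2
        _ = (m : ℝ) * (Δ⁻¹ * c) ^ 2 := by simp [mul_comm]
    calc Real.sqrt (∑ i : Fin m, ‖(T Lh w) i‖ ^ 2) ≤ Real.sqrt ((m : ℝ) * (Δ⁻¹ * c) ^ 2) :=
          Real.sqrt_le_sqrt h1
      _ = Real.sqrt m * (Δ⁻¹ * c) := by
          rw [Real.sqrt_mul (Nat.cast_nonneg m), Real.sqrt_sq (by positivity)]
  calc ‖w‖ = ‖T Lh⁻¹ (T Lh w)‖ := by rw [hw]
    _ ≤ ‖T Lh⁻¹‖ * ‖T Lh w‖ := (T Lh⁻¹).le_opNorm _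
    _ ≤ specNorm Lh⁻¹ * (Real.sqrt m * (Δ⁻¹ * c)) := by
        apply mul_le_mul_of_nonneg_left hTLw (norm_nonneg _)
    _ = Real.sqrt m * specNorm (Δ⁻¹ • Lmat Y)⁻¹ * c / Δ := by
        rw [hLh]; field_simp

lemma grad_mem_subdiff {O O' : Set (EuclideanSpace ℝ (Fin m))}
    {f φ : EuclideanSpace ℝ (Fin m) → ℝ}
    (hf : ConvexOn ℝ O f) (hO'open : IsOpen O') (hO'O : O' ⊆ O)
    {x : EuclideanSpace ℝ (Fin m)} (hx : x ∈ O')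
    (hle : ∀ y ∈ O', φ y ≤ f y) (heq : φ x = f x)
    (hdiff : DifferentiableAt ℝ φ x) :
    gradient φ x ∈ subdiff O f x := by
  intro y hy
  set d : EuclideanSpace ℝ (Fin m) := y - x with hd
  have hxO : x ∈ O := hO'O hx
  have hγ : HasDerivAt (fun t : ℝ => x + t • d) d 0 := by
    simpa using ((hasDerivAt_id (0:ℝ)).smul_const d).const_add x
  have h0 : x + (0:ℝ) • d = x := by simp
  have hfd : HasFDerivAt φ (fderiv ℝ φ x) (x + (0:ℝ) • d) := by
    rw [h0]; exact hdiff.hasFDerivAt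
  have hder : HasDerivAt (fun t : ℝ => φ (x + t • d)) ⟪gradient φ x, d⟫ 0 := by
    rw [inner_gradient_eq']
    exact hfd.comp_hasDerivAt 0 hγ
  have hslope : Filter.Tendsto (slope (fun t : ℝ => φ (x + t • d)) 0)
      (nhdsWithin 0 (Set.Ioi 0)) (nhds ⟪gradient φ x, d⟫) :=
    (hasDerivAt_iff_tendsto_slope.1 hder).mono_left
      (nhdsWithin_mono 0 (fun t ht => ne_of_gt ht))
  have hevO' : ∀ᶠ t in nhdsWithin (0:ℝ) (Set.Ioi 0), x + t • d ∈ O' := by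
    apply Filter.Eventually.filter_mono nhdsWithin_le_nhds
    have hcont : ContinuousAt (fun t : ℝ => x + t • d) 0 := by fun_prop
    have hmem : O' ∈ nhds (x + (0:ℝ) • d) := by rw [h0]; exact hO'open.mem_nhds hx
    exact hcont hmem
  have hIoo : ∀ᶠ t in nhdsWithin (0:ℝ) (Set.Ioi 0), t ∈ Set.Ioo (0:ℝ) 1 :=
    Ioo_mem_nhdsGT (by norm_num)
  have hev : ∀ᶠ t in nhdsWithin (0:ℝ) (Set.Ioi 0),
      slope (fun t : ℝ => φ (x + t • d)) 0 t ≤ f y - f x := by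
    filter_upwards [hevO', hIoo] with t htO' ht
    have ht0 : 0 < t := ht.1
    have hconv : f (x + t • d) ≤ (1 - t) * f x + t * f y := by
      have hcomb := hf.2 hxO hy (by linarith [ht.2] : (0:ℝ) ≤ 1 - t) ht0.le (by ring)
      have hpt : (1 - t) • x + t • y = x + t • d := by rw [hd]; module
      rwa [hpt] at hcomb
    have hφ : φ (x + t • d) ≤ f (x + t • d) := hle _ htO'
    have hsl : slope (fun t : ℝ => φ (x + t • d)) 0 t = (φ (x + t • d) - φ x) / t := by
      rw [slope_def_field]
      rw [h0, sub_zero]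
    rw [hsl, div_le_iff₀ ht0]
    nlinarith [heq]
  have hlim : ⟪gradient φ x, d⟫ ≤ f y - f x := le_of_tendsto hslope hev
  linarith [hlim]

lemma interp_grad_bound (hm : 1 ≤ m)
    {O' X : Set (EuclideanSpace ℝ (Fin m))} (hO'open : IsOpen O') (hXO' : X ⊆ O')
    (hXconv : Convex ℝ X)
    {h : EuclideanSpace ℝ (Fin m) → ℝ} (hC : ContDiffOn ℝ 2 h O') {K : ℝ} (hK : 0 ≤ K)
    (hlip : ∀ p ∈ X, ∀ q ∈ X, ‖gradient h p - gradient h q‖ ≤ K * ‖p - q‖)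
    (Y : Fin (m + 1) → EuclideanSpace ℝ (Fin m)) (hp : Poised Y) {Δ : ℝ}
    (hΔ : IsGreatest (Set.range fun i : Fin m => ‖Y i.succ - Y 0‖) Δ)
    (hball : Metric.closedBall (Y 0) Δ ⊆ X)
    (a₀ : ℝ) (a : EuclideanSpace ℝ (Fin m)) (hinterp : ∀ j, a₀ + ⟪a, Y j⟫ = h (Y j))
    {x : EuclideanSpace ℝ (Fin m)} (hx : x ∈ Metric.closedBall (Y 0) Δ) :
    ‖gradient h x - a‖ ≤ K * (1 + Real.sqrt m * specNorm (Δ⁻¹ • Lmat Y)⁻¹ / 2) * Δ := by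
  haveI : NeZero m := ⟨by omega⟩
  have hΔub : ∀ i : Fin m, ‖Y i.succ - Y 0‖ ≤ Δ := fun i => hΔ.2 ⟨i, rfl⟩
  have hΔ0 : 0 ≤ Δ := by
    obtain ⟨i, hi⟩ := hΔ.1
    rw [← hi]; exact norm_nonneg _
  have hdet : (Lmat Y).det ≠ 0 := poised_det Y hp
  have hΔpos : 0 < Δ := by
    rcases hΔ0.lt_or_eq with h' | h'
    · exact h'
    · exfalso
      apply hdet
      apply Matrix.det_eq_zero_of_row_eq_zero (0 : Fin m)
      intro j
      have : ‖Y (0 : Fin m).succ - Y 0‖ ≤ 0 := h' ▸ hΔub 0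
      have hz : Y (0 : Fin m).succ - Y 0 = 0 := by
        simpa using norm_le_zero_iff.1 this
      show (Y (0 : Fin m).succ - Y 0) j = 0
      rw [hz]; rfl
  have hY0X : Y 0 ∈ X := hball (Metric.mem_closedBall_self hΔ0)
  have hYiX : ∀ i : Fin m, Y i.succ ∈ X := fun i =>
    hball (by rw [Metric.mem_closedBall, dist_eq_norm]; exact hΔub i)
  have hxX : x ∈ X := hball hx
  set w : EuclideanSpace ℝ (Fin m) := gradient h (Y 0) - a with hw
  have hrow : ∀ i : Fin m, |⟪Y i.succ - Y 0, w⟫| ≤ K / 2 * Δ ^ 2 := by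
    intro i
    have hinn : ⟪Y i.succ - Y 0, w⟫
        = -(h (Y i.succ) - h (Y 0) - ⟪gradient h (Y 0), Y i.succ - Y 0⟫) := by
      have ha : ⟪a, Y i.succ - Y 0⟫ = h (Y i.succ) - h (Y 0) := by
        rw [inner_sub_right]
        have h1 := hinterp i.succ
        have h2 := hinterp 0
        linarith
      rw [real_inner_comm, hw, inner_sub_left, ha]
      ring
    rw [hinn, abs_neg]
    calc |h (Y i.succ) - h (Y 0) - ⟪gradient h (Y 0), Y i.succ - Y 0⟫|
        ≤ K / 2 * ‖Y i.succ - Y 0‖ ^ 2 :=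
          taylor_bound hO'open hC hXO' hXconv hK hlip hY0X (hYiX i)
      _ ≤ K / 2 * Δ ^ 2 := by
          apply mul_le_mul_of_nonneg_left _ (by linarith)
          exact pow_le_pow_left₀ (norm_nonneg _) (hΔub i) 2
  have hwb : ‖w‖ ≤ Real.sqrt m * specNorm (Δ⁻¹ • Lmat Y)⁻¹ * (K / 2 * Δ ^ 2) / Δ :=
    norm_le_of_rows Y hdet hΔpos w (by positivity) hrow
  have hspec0 : 0 ≤ specNorm (Δ⁻¹ • Lmat Y)⁻¹ := norm_nonneg _
  have hx0 : ‖x - Y 0‖ ≤ Δ := by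
    rw [Metric.mem_closedBall, dist_eq_norm] at hx; exact hx
  have hgx : ‖gradient h x - gradient h (Y 0)‖ ≤ K * Δ := by
    calc ‖gradient h x - gradient h (Y 0)‖ ≤ K * ‖x - Y 0‖ := hlip x hxX (Y 0) hY0X
      _ ≤ K * Δ := mul_le_mul_of_nonneg_left hx0 hK
  calc ‖gradient h x - a‖ = ‖(gradient h x - gradient h (Y 0)) + w‖ := by
        rw [hw]; congr 1; abel
    _ ≤ ‖gradient h x - gradient h (Y 0)‖ + ‖w‖ := norm_add_le _ _
    _ ≤ K * Δ + Real.sqrt m * specNorm (Δ⁻¹ • Lmat Y)⁻¹ * (K / 2 * Δ ^ 2) / Δ := by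
        exact add_le_add hgx hwb
    _ = K * (1 + Real.sqrt m * specNorm (Δ⁻¹ • Lmat Y)⁻¹ / 2) * Δ := by
        field_simp

lemma family_bounds (hm : 1 ≤ m)
    {O O' X : Set (EuclideanSpace ℝ (Fin m))}
    {f : EuclideanSpace ℝ (Fin m) → ℝ} (hf : ConvexOn ℝ O f)
    (hO'open : IsOpen O') (hXO' : X ⊆ O') (hO'O : O' ⊆ O) (hXconv : Convex ℝ X)
    {T : Type} [TopologicalSpace T] {ft : T → EuclideanSpace ℝ (Fin m) → ℝ}
    (hrep : IsLowerC2Rep T f ft O')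
    {K : ℝ} (hK : 0 ≤ K)
    (hLip : ∀ t, ∀ p ∈ X, ∀ q ∈ X,
      ‖gradient (ft t) p - gradient (ft t) q‖ ≤ K * ‖p - q‖)
    {L : ℝ} (hL0 : 0 ≤ L) (hL : ∀ z ∈ X, ∀ v ∈ subdiff O f z, ‖v‖ ≤ L)
    (Y : Fin (m + 1) → EuclideanSpace ℝ (Fin m)) (hp : Poised Y) {Δ : ℝ}
    (hΔ : IsGreatest (Set.range fun i : Fin m => ‖Y i.succ - Y 0‖) Δ)
    (hball : Metric.closedBall (Y 0) Δ ⊆ X)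
    {x : EuclideanSpace ℝ (Fin m)} (hx : x ∈ Metric.closedBall (Y 0) Δ)
    {r : ℕ} (hr : 1 ≤ r) (ts : Fin r → T) (hts : ∀ i, ft (ts i) x = f x)
    (lam : Fin r → ℝ) (hlam0 : ∀ i, 0 ≤ lam i) (hlamsum : ∑ i, lam i = 1)
    (F : Fin r → EuclideanSpace ℝ (Fin m) → ℝ)
    (hFaff : ∀ i, ∃ (a₀ : ℝ) (a : EuclideanSpace ℝ (Fin m)),
      F i = fun z => a₀ + ⟪a, z⟫)
    (hFinterp : ∀ i, ∀ j, F i (Y j) = ft (ts i) (Y j)) :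
    ‖(∑ i, lam i • gradient (ft (ts i)) x) - ∑ i, lam i • gradient (F i) x‖ ≤
        K * (1 + Real.sqrt m * specNorm (Δ⁻¹ • Lmat Y)⁻¹ / 2) * Δ ∧
      ‖∑ i, lam i • gradient (F i) x‖ ≤
        L + K * (1 + Real.sqrt m * specNorm (Δ⁻¹ • Lmat Y)⁻¹ / 2) * Δ := by
  set κ : ℝ := K * (1 + Real.sqrt m * specNorm (Δ⁻¹ • Lmat Y)⁻¹ / 2) * Δ with hκ
  have hxX : x ∈ X := hball hx
  have hxO' : x ∈ O' := hXO' hxX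
  have hibound : ∀ i, ‖gradient (ft (ts i)) x - gradient (F i) x‖ ≤ κ := by
    intro i
    obtain ⟨a₀, a, haff⟩ := hFaff i
    have hga : gradient (F i) x = a := by rw [haff]; exact grad_affine a₀ a x
    rw [hga]
    exact interp_grad_bound hm hO'open hXO' hXconv (hrep.1 (ts i)) hK
      (hLip (ts i)) Y hp hΔ hball a₀ a
      (fun j => by rw [← hFinterp i j, haff]) hx
  have hκ0 : 0 ≤ κ := le_trans (norm_nonneg _) (hibound ⟨0, by omega⟩)
  have hdiffsum :
      (∑ i, lam i • gradient (ft (ts i)) x) - ∑ i, lam i • gradient (F i) x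
        = ∑ i, lam i • (gradient (ft (ts i)) x - gradient (F i) x) := by
    rw [← Finset.sum_sub_distrib]
    congr 1; ext i; rw [smul_sub]
  have part1 : ‖(∑ i, lam i • gradient (ft (ts i)) x)
      - ∑ i, lam i • gradient (F i) x‖ ≤ κ := by
    rw [hdiffsum]
    calc ‖∑ i, lam i • (gradient (ft (ts i)) x - gradient (F i) x)‖
        ≤ ∑ i, ‖lam i • (gradient (ft (ts i)) x - gradient (F i) x)‖ :=
          norm_sum_le _ _
      _ ≤ ∑ i, lam i * κ := by
          apply Finset.sum_le_sum
          intro i _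
          rw [norm_smul, Real.norm_eq_abs, abs_of_nonneg (hlam0 i)]
          exact mul_le_mul_of_nonneg_left (hibound i) (hlam0 i)
      _ = κ := by rw [← Finset.sum_mul, hlamsum, one_mul]
  have hsub : ∀ i, ‖gradient (ft (ts i)) x‖ ≤ L := by
    intro i
    apply hL x hxX
    apply grad_mem_subdiff hf hO'open hO'O hxO'
      (fun y hy => ((hrep.2.2.2.2 y hy).1 (ts i))) (hts i)
    exact ((hrep.1 (ts i)).differentiableOn (by norm_num)).differentiableAt
      (hO'open.mem_nhds hxO')
  have hv : ‖∑ i, lam i • gradient (ft (ts i)) x‖ ≤ L := by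
    calc ‖∑ i, lam i • gradient (ft (ts i)) x‖
        ≤ ∑ i, ‖lam i • gradient (ft (ts i)) x‖ := norm_sum_le _ _
      _ ≤ ∑ i, lam i * L := by
          apply Finset.sum_le_sum
          intro i _
          rw [norm_smul, Real.norm_eq_abs, abs_of_nonneg (hlam0 i)]
          exact mul_le_mul_of_nonneg_left (hsub i) (hlam0 i)
      _ = L := by rw [← Finset.sum_mul, hlamsum, one_mul]
  refine ⟨part1, ?_⟩
  calc ‖∑ i, lam i • gradient (F i) x‖
      = ‖(∑ i, lam i • gradient (ft (ts i)) x)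
          - ((∑ i, lam i • gradient (ft (ts i)) x) - ∑ i, lam i • gradient (F i) x)‖ := by
        congr 1; abel
    _ ≤ ‖∑ i, lam i • gradient (ft (ts i)) x‖
          + ‖(∑ i, lam i • gradient (ft (ts i)) x) - ∑ i, lam i • gradient (F i) x‖ :=
        norm_sub_le _ _
    _ ≤ L + κ := add_le_add hv part1

theorem approximate_subgradient_comirror_bounds {m : ℕ} (hm : 1 ≤ m)
    (O : Set (EuclideanSpace ℝ (Fin m))) (hOne : O.Nonempty) (hOopen : IsOpen O)
    (hOconv : Convex ℝ O)
    (f g : EuclideanSpace ℝ (Fin m) → ℝ)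
    (hf : ConvexOn ℝ O f) (hg : ConvexOn ℝ O g)
    (X : Set (EuclideanSpace ℝ (Fin m))) (hXne : X.Nonempty) (hXcpt : IsCompact X)
    (hXconv : Convex ℝ X) (hXO : X ⊆ O)
    (O' : Set (EuclideanSpace ℝ (Fin m))) (hO'open : IsOpen O')
    (hXO' : X ⊆ O') (hO'O : O' ⊆ O)
    (Tf Tg : Type) [TopologicalSpace Tf] [CompactSpace Tf]
    [TopologicalSpace Tg] [CompactSpace Tg]
    (ftf : Tf → EuclideanSpace ℝ (Fin m) → ℝ)
    (ftg : Tg → EuclideanSpace ℝ (Fin m) → ℝ)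
    (hrepf : IsLowerC2Rep Tf f ftf O') (hrepg : IsLowerC2Rep Tg g ftg O')
    (Kf Kg : ℝ) (hKf0 : 0 ≤ Kf) (hKg0 : 0 ≤ Kg)
    (hLipf : ∀ t : Tf, ∀ x ∈ X, ∀ y ∈ X,
      ‖gradient (ftf t) x - gradient (ftf t) y‖ ≤ Kf * ‖x - y‖)
    (hLipg : ∀ t : Tg, ∀ x ∈ X, ∀ y ∈ X,
      ‖gradient (ftg t) x - gradient (ftg t) y‖ ≤ Kg * ‖x - y‖)
    (Lf Lg : ℝ) (hLf0 : 0 ≤ Lf) (hLg0 : 0 ≤ Lg)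
    (hLf : ∀ x ∈ X, ∀ v ∈ subdiff O f x, ‖v‖ ≤ Lf)
    (hLg : ∀ x ∈ X, ∀ v ∈ subdiff O g x, ‖v‖ ≤ Lg)
    (Y : Fin (m + 1) → EuclideanSpace ℝ (Fin m)) (hY0 : Y 0 ∈ X)
    (hpoised : Poised Y)
    (Δ : ℝ) (hΔ : IsGreatest (Set.range fun i : Fin m => ‖Y i.succ - Y 0‖) Δ)
    (hball : Metric.closedBall (Y 0) Δ ⊆ X)
    (ε : ℝ) (hε : 0 < ε)
    (x : EuclideanSpace ℝ (Fin m)) (hx : x ∈ Metric.closedBall (Y 0) Δ)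
    (r rbar : ℕ) (hr : 1 ≤ r) (hrbar : 1 ≤ rbar)
    (ts : Fin r → Tf) (hts : ∀ i, ftf (ts i) x = f x)
    (lam : Fin r → ℝ) (hlam0 : ∀ i, 0 ≤ lam i) (hlam1 : ∀ i, lam i ≤ 1)
    (hlamsum : ∑ i, lam i = 1)
    (tsbar : Fin rbar → Tg) (htsbar : ∀ i, ftg (tsbar i) x = g x)
    (lambar : Fin rbar → ℝ) (hlambar0 : ∀ i, 0 ≤ lambar i)
    (hlambar1 : ∀ i, lambar i ≤ 1) (hlambarsum : ∑ i, lambar i = 1)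
    (F : Fin r → EuclideanSpace ℝ (Fin m) → ℝ)
    (hFaff : ∀ i, ∃ (a₀ : ℝ) (a : EuclideanSpace ℝ (Fin m)),
      F i = fun z => a₀ + ⟪a, z⟫)
    (hFinterp : ∀ i, ∀ j, F i (Y j) = ftf (ts i) (Y j))
    (G : Fin rbar → EuclideanSpace ℝ (Fin m) → ℝ)
    (hGaff : ∀ i, ∃ (a₀ : ℝ) (a : EuclideanSpace ℝ (Fin m)),
      G i = fun z => a₀ + ⟪a, z⟫)
    (hGinterp : ∀ i, ∀ j, G i (Y j) = ftg (tsbar i) (Y j))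
    (vf Vf vg Vg ex Ex : EuclideanSpace ℝ (Fin m))
    (hvf : vf = ∑ i, lam i • gradient (ftf (ts i)) x)
    (hVf : Vf = ∑ i, lam i • gradient (F i) x)
    (hvg : vg = ∑ i, lambar i • gradient (ftg (tsbar i)) x)
    (hVg : Vg = ∑ i, lambar i • gradient (G i) x)
    (hex : ex = if g x ≤ ε then vf else vg)
    (hEx : Ex = if g x ≤ ε then Vf else Vg) :
    ‖ex - Ex‖ ≤
        max Kf Kg * (1 + Real.sqrt (m : ℝ) * specNorm (Δ⁻¹ • Lmat Y)⁻¹ / 2) * Δ ∧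
      ‖Ex‖ ≤ max Lf Lg +
        max Kf Kg * (1 + Real.sqrt (m : ℝ) * specNorm (Δ⁻¹ • Lmat Y)⁻¹ / 2) * Δ := by
  haveI : Nonempty (Fin m) := ⟨⟨0, by omega⟩⟩
  have hΔ0 : 0 ≤ Δ := by
    obtain ⟨i, hi⟩ := hΔ.1
    rw [← hi]; exact norm_nonneg _
  have hA0 : 0 ≤ 1 + Real.sqrt (m : ℝ) * specNorm (Δ⁻¹ • Lmat Y)⁻¹ / 2 := by
    have h1 : 0 ≤ Real.sqrt (m : ℝ) * specNorm (Δ⁻¹ • Lmat Y)⁻¹ :=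
      mul_nonneg (Real.sqrt_nonneg _) (norm_nonneg _)
    linarith
  subst hvf hVf hvg hVg hex hEx
  by_cases hgε : g x ≤ ε
  · simp only [if_pos hgε]
    obtain ⟨h1, h2⟩ := family_bounds hm hf hO'open hXO' hO'O hXconv hrepf hKf0
      hLipf hLf0 hLf Y hpoised hΔ hball hx hr ts hts lam hlam0 hlamsum F hFaff hFinterp
    have hmono : Kf * (1 + Real.sqrt (m : ℝ) * specNorm (Δ⁻¹ • Lmat Y)⁻¹ / 2) * Δ ≤
        max Kf Kg * (1 + Real.sqrt (m : ℝ) * specNorm (Δ⁻¹ • Lmat Y)⁻¹ / 2) * Δ := by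
      apply mul_le_mul_of_nonneg_right _ hΔ0
      exact mul_le_mul_of_nonneg_right (le_max_left _ _) hA0
    exact ⟨h1.trans hmono, h2.trans (add_le_add (le_max_left _ _) hmono)⟩
  · simp only [if_neg hgε]
    obtain ⟨h1, h2⟩ := family_bounds hm hg hO'open hXO' hO'O hXconv hrepg hKg0
      hLipg hLg0 hLg Y hpoised hΔ hball hx hrbar tsbar htsbar lambar hlambar0
      hlambarsum G hGaff hGinterp
    have hmono : Kg * (1 + Real.sqrt (m : ℝ) * specNorm (Δ⁻¹ • Lmat Y)⁻¹ / 2) * Δ ≤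
        max Kf Kg * (1 + Real.sqrt (m : ℝ) * specNorm (Δ⁻¹ • Lmat Y)⁻¹ / 2) * Δ := by
      apply mul_le_mul_of_nonneg_right _ hΔ0
      exact mul_le_mul_of_nonneg_right (le_max_right _ _) hA0
    exact ⟨h1.trans hmono, h2.trans (add_le_add (le_max_right _ _) hmono)⟩
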